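/- Let H_1, …, H_{J-1} be p_j × m real matrices and H_c a p_c × m real matrix, and form the (p_1 + ⋯ + p_{J-1} + p_c) × m(J−1) block matrix H whose first block rows form the block-diagonal matrix with blocks H_1, …, H_{J-1} and whose last block row is (H_c, H_c, …, H_c). Then rank(H) = rank(H_1) + ⋯ + rank(H_{J-1}) + rank(H_c) − dim( R(H_c) ∩ (⋂_{j=1}^{J-1} R(H_j)) ), where R(M) denotes the row space of M. -/

import Mathlib

open Matrix Submodule Set Module

/-- A linear equivalence between a pi-submodule and the product of subtypes. -/
def piSubmoduleEquiv {K : Type*} {R : Type*} [Semiring R]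
    {φ : K → Type*} [∀ j, AddCommMonoid (φ j)] [∀ j, Module R (φ j)]
    (p : ∀ j, Submodule R (φ j)) :
    (∀ j, ↥(p j)) ≃ₗ[R] ↥(Submodule.pi Set.univ p) where
  toFun f := ⟨fun j => (f j : φ j), fun j _ => (f j).2⟩
  map_add' f g := rfl
  map_smul' c f := rfl
  invFun x := fun j => ⟨x.1 j, x.2 j trivial⟩
  left_inv f := rfl
  right_inv x := rfl

theorem ppo_block_matrix_rank
    (K m pc : ℕ) (p : Fin K → ℕ)
    (H : ∀ j : Fin K, Matrix (Fin (p j)) (Fin m) ℝ)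
    (Hc : Matrix (Fin pc) (Fin m) ℝ) :
    (Matrix.fromRows
        (Matrix.blockDiagonal' (fun j => H j) :
          Matrix (Σ j : Fin K, Fin (p j)) (Σ _ : Fin K, Fin m) ℝ)
        (Matrix.of fun r (c : Σ _ : Fin K, Fin m) => Hc r c.2)).rank
      + Module.finrank ℝ
          ↥(Submodule.span ℝ (Set.range fun i => Hc i) ⊓
            ⨅ j : Fin K, Submodule.span ℝ (Set.range fun i => H j i))
      = (∑ j, (H j).rank) + Hc.rank := by
  classical
  have hHj : ∀ j, (H j).rank = finrank ℝ (span ℝ (Set.range (H j))) :=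
    fun j => (H j).rank_eq_finrank_span_row
  have hHc : Hc.rank = finrank ℝ (span ℝ (Set.range Hc)) := Hc.rank_eq_finrank_span_row
  rcases Nat.eq_zero_or_pos K with hK | hK
  · subst hK
    have h1 : (Matrix.fromRows
        (Matrix.blockDiagonal' (fun j => H j) :
          Matrix (Σ j : Fin 0, Fin (p j)) (Σ _ : Fin 0, Fin m) ℝ)
        (Matrix.of fun r (c : Σ _ : Fin 0, Fin m) => Hc r c.2)).rank = 0 := by
      have := (Matrix.fromRows
        (Matrix.blockDiagonal' (fun j => H j) :
          Matrix (Σ j : Fin 0, Fin (p j)) (Σ _ : Fin 0, Fin m) ℝ)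
        (Matrix.of fun r (c : Σ _ : Fin 0, Fin m) => Hc r c.2)).rank_le_card_width
      simpa using this
    rw [h1, show (⨅ j : Fin 0, span ℝ (Set.range fun i => H j i)) = ⊤ from iInf_of_empty _]
    rw [inf_top_eq]
    simp only [Finset.univ_eq_empty, Finset.sum_empty, zero_add]
    exact hHc.symm
  · -- notation
    set V := (Fin m → ℝ) with hV
    set Rj : Fin K → Submodule ℝ V := fun j => span ℝ (Set.range (H j)) with hRjdef
    set Rc : Submodule ℝ V := span ℝ (Set.range Hc) with hRcdef
    let e : ((Σ _ : Fin K, Fin m) → ℝ) ≃ₗ[ℝ] ∀ _ : Fin K, V :=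
      LinearEquiv.piCurry ℝ (fun (_ : Fin K) (_ : Fin m) => ℝ)
    let Δ : V →ₗ[ℝ] (∀ _ : Fin K, V) := LinearMap.pi fun _ => LinearMap.id
    have hΔapp : ∀ (x : V) (k : Fin K), Δ x k = x := fun x k => rfl
    obtain ⟨j0⟩ : Nonempty (Fin K) := ⟨⟨0, hK⟩⟩
    have hΔinj : Function.Injective Δ := by
      intro x y hxy
      have := congrFun hxy j0
      simpa [hΔapp] using this
    set A : Matrix (Σ j : Fin K, Fin (p j)) (Σ _ : Fin K, Fin m) ℝ :=
      Matrix.blockDiagonal' (fun j => H j) with hA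
    set C : Matrix (Fin pc) (Σ _ : Fin K, Fin m) ℝ :=
      Matrix.of fun r (c : Σ _ : Fin K, Fin m) => Hc r c.2 with hC
    set P : Submodule ℝ (∀ _ : Fin K, V) := Submodule.pi Set.univ Rj with hP
    set B : Submodule ℝ (∀ _ : Fin K, V) := Submodule.map Δ Rc with hB
    -- rows of A map to Pi.single
    have heA : ∀ r : Σ j : Fin K, Fin (p j), e (A r) = Pi.single r.1 (H r.1 r.2) := by
      rintro ⟨j, i⟩
      funext k
      by_cases hkj : k = j
      · subst hkj
        funext c
        simp [e, Sigma.curry, hA]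
      · funext c
        have h0 : A ⟨j, i⟩ ⟨k, c⟩ = 0 :=
          Matrix.blockDiagonal'_apply_ne _ _ _ (fun h => hkj h.symm)
        simp only [e, LinearEquiv.piCurry_apply, Sigma.curry, h0, Pi.single_eq_of_ne hkj]
        rfl
    have heC : ∀ r : Fin pc, e (C r) = Δ (Hc r) := fun r => rfl
    -- the row span of the big matrix maps to P ⊔ B
    have hmapA : Submodule.map e.toLinearMap (span ℝ (Set.range A)) = P := by
      rw [Submodule.map_span]
      have himg : e.toLinearMap '' (Set.range A)
          = ⋃ j, (LinearMap.single ℝ (fun _ : Fin K => V) j) '' Set.range (H j) := by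
        ext x
        simp only [Set.mem_image, Set.mem_range, Set.mem_iUnion]
        constructor
        · rintro ⟨-, ⟨⟨j, i⟩, rfl⟩, rfl⟩
          exact ⟨j, H j i, ⟨i, rfl⟩, (heA ⟨j, i⟩).symm⟩
        · rintro ⟨j, -, ⟨i, rfl⟩, rfl⟩
          exact ⟨A ⟨j, i⟩, ⟨⟨j, i⟩, rfl⟩, heA ⟨j, i⟩⟩
      rw [himg, span_iUnion]
      have : ∀ j, span ℝ ((LinearMap.single ℝ (fun _ : Fin K => V) j) '' Set.range (H j))
          = Submodule.map (LinearMap.single ℝ (fun _ : Fin K => V) j) (Rj j) := by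
        intro j
        rw [Submodule.map_span]
      simp_rw [this]
      exact Submodule.iSup_map_single
    have hmapC : Submodule.map e.toLinearMap (span ℝ (Set.range C)) = B := by
      rw [Submodule.map_span]
      have himg : e.toLinearMap '' (Set.range C) = Δ '' Set.range Hc := by
        ext x
        simp only [Set.mem_image, Set.mem_range]
        constructor
        · rintro ⟨-, ⟨r, rfl⟩, rfl⟩
          exact ⟨Hc r, ⟨r, rfl⟩, (heC r).symm⟩
        · rintro ⟨-, ⟨r, rfl⟩, rfl⟩
          exact ⟨C r, ⟨r, rfl⟩, heC r⟩
      rw [himg, ← Submodule.map_span]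
    -- rank of the big matrix
    have hrank : (Matrix.fromRows A C).rank = finrank ℝ ↥(P ⊔ B) := by
      rw [Matrix.rank_eq_finrank_span_row]
      have hr : Set.range (Matrix.fromRows A C) = Set.range A ∪ Set.range C :=
        Sum.elim_range A C
      rw [show (Matrix.fromRows A C).row = Matrix.fromRows A C from rfl, hr, Submodule.span_union, ← LinearEquiv.finrank_map_eq e, Submodule.map_sup,
        hmapA, hmapC]
    -- finrank of P
    have hfP : finrank ℝ ↥P = ∑ j, finrank ℝ ↥(Rj j) := by
      rw [← (piSubmoduleEquiv Rj).finrank_eq]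
      exact Module.finrank_pi_fintype ℝ
    -- finrank of B
    have hfB : finrank ℝ ↥B = finrank ℝ ↥Rc :=
      ((Submodule.equivMapOfInjective Δ hΔinj Rc).finrank_eq).symm
    -- the intersection
    have hinter : P ⊓ B = Submodule.map Δ (Rc ⊓ ⨅ j, Rj j) := by
      ext x
      simp only [Submodule.mem_inf, Submodule.mem_map, Submodule.mem_pi, Set.mem_univ,
        Submodule.mem_iInf, forall_true_left]
      constructor
      · rintro ⟨hpi, y, hy, rfl⟩
        exact ⟨y, ⟨hy, fun j => by simpa [hΔapp] using hpi j⟩, rfl⟩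
      · rintro ⟨y, ⟨hy1, hy2⟩, rfl⟩
        exact ⟨fun j => by simpa [hΔapp] using hy2 j, y, hy1, rfl⟩
    have hfI : finrank ℝ ↥(P ⊓ B) = finrank ℝ ↥(Rc ⊓ ⨅ j, Rj j) := by
      rw [hinter]
      exact ((Submodule.equivMapOfInjective Δ hΔinj _).finrank_eq).symm
    have hsum := Submodule.finrank_sup_add_finrank_inf_eq P B
    show (Matrix.fromRows A C).rank + finrank ℝ ↥(Rc ⊓ ⨅ j, Rj j)
      = (∑ j, (H j).rank) + Hc.rank
    rw [hrank, ← hfI]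
    have h1 : (∑ j, (H j).rank) = ∑ j, finrank ℝ ↥(Rj j) := by
      exact Finset.sum_congr rfl fun j _ => hHj j
    rw [h1, hHc, ← hfP, ← hfB]
    omega
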